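/- Let S = {x, y} and for each integer i ≥ 14 let r_i = ∏_{j=0}^{2i} x y^{i²+j}, and let R = {r_i : i ≥ 14}. Then for every i ≥ 14: |r_i| ≥ i³, and every piece (with respect to R) that is a subword of some word in the set of cyclic shifts of r_i and r_i⁻¹ has length strictly less than 2(i+1)². (Indeed every such piece has one of the forms y^k, y^{-k}, y^k x y^{k'}, or y^{-k} x⁻¹ y^{-k'} with 0 ≤ k, k' ≤ (i+1)² − 1.) -/

import Mathlib

namespace SmallCancel

/-- A word over `S`: a finite sequence of letters from the symmetrized alphabet
`S ∪ S⁻¹`, encoded as pairs `(s, b)` where `b = true` denotes the letter `s`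
and `b = false` denotes its formal inverse `s⁻¹`. -/
abbrev Word (S : Type) := List (S × Bool)

/-- The formal inverse of a word. -/
def wInv {S : Type} (w : Word S) : Word S := (w.map fun a => (a.1, !a.2)).reverse

/-- A word is reduced if no letter is immediately followed by its inverse. -/
def Reduced {S : Type} (w : Word S) : Prop := w.Chain' fun a b => b ≠ (a.1, !a.2)

/-- A word is cyclically reduced if all of its cyclic shifts are reduced. -/
def CyclicallyReduced {S : Type} (w : Word S) : Prop := ∀ n, Reduced (w.rotate n)

/-- `R̄`: the set of all cyclic shifts of elements of `R` and of their inverses. -/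
def cyclicClosure {S : Type} (R : Set (Word S)) : Set (Word S) :=
  {w | ∃ r ∈ R, ∃ n, w = r.rotate n ∨ w = (wInv r).rotate n}

/-- `p` is a piece with respect to `R` if it is a prefix of two distinct elements
of `R̄`. -/
def IsPiece {S : Type} (R : Set (Word S)) (p : Word S) : Prop :=
  ∃ r₁ ∈ cyclicClosure R, ∃ r₂ ∈ cyclicClosure R, r₁ ≠ r₂ ∧ p <+: r₁ ∧ p <+: r₂

/-- The `C'(λ)` small-cancellation condition: every piece `p` that is a subword of
some `r ∈ R̄` satisfies `|p| < λ|r|`. -/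
def SmallCancellation {S : Type} (R : Set (Word S)) (lam : ℝ) : Prop :=
  ∀ p, IsPiece R p → ∀ r ∈ cyclicClosure R, p <:+: r →
    (p.length : ℝ) < lam * r.length

/-- The element of the presented group `⟨S | R⟩` represented by a word `w`. -/
def toPresented {S : Type} (R : Set (Word S)) (w : Word S) :
    PresentedGroup {g : FreeGroup S | ∃ r ∈ R, g = FreeGroup.mk r} :=
  QuotientGroup.mk (FreeGroup.mk w)

/-- A word `w` is geodesic if every word representing the same element of the
presented group `⟨S | R⟩` is at least as long as `w`. -/
def IsGeodesicWord {S : Type} (R : Set (Word S)) (w : Word S) : Prop :=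
  ∀ v : Word S, toPresented R v = toPresented R w → w.length ≤ v.length

/-- The finite prefix of length `n` of an infinite word `γ`. -/
def rayPrefix {S : Type} (γ : ℕ → S × Bool) (n : ℕ) : Word S := (List.range n).map γ

/-- A geodesic ray: an infinite word all of whose finite prefixes are geodesic. -/
def IsGeodesicRay {S : Type} (R : Set (Word S)) (γ : ℕ → S × Bool) : Prop :=
  ∀ n, IsGeodesicWord R (rayPrefix γ n)

/-- The intersection function of a ray `γ`:
`ρ_γ(t) = max{|w| : w is a subword of some r ∈ R̄ with |r| ≤ t and a subword of γ}`. -/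
noncomputable def intersectionFn {S : Type} (R : Set (Word S)) (γ : ℕ → S × Bool)
    (t : ℕ) : ℕ :=
  sSup {n | ∃ w : Word S, (∃ r ∈ cyclicClosure R, r.length ≤ t ∧ w <:+: r) ∧
    (∃ m, w <:+: rayPrefix γ m) ∧ w.length = n}

/-- A function is sublinear if `ρ(n)/n → 0`. -/
def Sublinear (ρ : ℕ → ℝ) : Prop :=
  Filter.Tendsto (fun n => ρ n / n) Filter.atTop (nhds 0)

/-- A weakly increasing function `f : ℕ → ℝ` is viable if `f(n) ≥ 6` for all `n`
and `f(n) → ∞`. -/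
def Viable (f : ℕ → ℝ) : Prop :=
  Monotone f ∧ (∀ n, 6 ≤ f n) ∧ Filter.Tendsto f Filter.atTop Filter.atTop

/-- The `C'(1/f)` small-cancellation condition for a set of relators: every piece `p`
that is a subword of some `r ∈ R̄` satisfies `|p| < |r|/f(|r|)`. -/
def CPrimeOverF {S : Type} (R : Set (Word S)) (f : ℕ → ℝ) : Prop :=
  ∀ p, IsPiece R p → ∀ r ∈ cyclicClosure R, p <:+: r →
    (p.length : ℝ) < (r.length : ℝ) / f r.length

/-- The pair `(x, R)` satisfies the `C'(1/f)` condition: every word `p` that is a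
subword both of `x` and of some `r ∈ R̄` satisfies `|p| < |r|/f(|r|)`. -/
def PairCPrimeOverF {S : Type} (x : Word S) (R : Set (Word S)) (f : ℕ → ℝ) : Prop :=
  ∀ p, p <:+: x → ∀ r ∈ cyclicClosure R, p <:+: r →
    (p.length : ℝ) < (r.length : ℝ) / f r.length

/-- The increasing partial small-cancellation condition (IPSC). -/
def IPSC {S : Type} (R : Set (Word S)) : Prop :=
  ∀ n : ℕ → ℕ, (∀ i, 0 < n i) → ∃ f : ℕ → ℝ, Viable f ∧
    ∀ K : ℕ, ∃ i, K ≤ i ∧ ∃ x y : Word S, x ++ y ∈ cyclicClosure R ∧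
      n i ≤ (x ++ y).length ∧ ((x ++ y).length : ℝ) / i ≤ x.length ∧
      PairCPrimeOverF x R f

end SmallCancel

namespace SmallCancel

/-- The alphabet `S = {x, y}`, encoded as `Bool` with `x = false` and `y = true`. -/
abbrev XY := Bool

/-- The letter `x`. -/
def xLetter : Word XY := [(false, true)]

/-- The word `y^k`. -/
def yPow (k : ℕ) : Word XY := List.replicate k (true, true)

/-- The relator `r_i = ∏_{j=0}^{2i} x y^{i²+j}`. -/
def rEx (i : ℕ) : Word XY :=
  ((List.range (2 * i + 1)).map fun j => xLetter ++ yPow (i ^ 2 + j)).flatten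

/-- The set of relators `R = {r_i : i ≥ 14}`. -/
def REx : Set (Word XY) := {w | ∃ i, 14 ≤ i ∧ w = rEx i}

end SmallCancel

open SmallCancel

namespace SmallCancel

/-! ### Auxiliary development for the example -/

/-- The letter `x` (as a single letter). -/
def XL : XY × Bool := (false, true)
/-- The letter `y` (as a single letter). -/
def YL : XY × Bool := (true, true)

lemma XL_ne_YL : XL ≠ YL := by decide

/-- Position of the `k`-th `x` in `r_i`. -/
def P (i k : ℕ) : ℕ := ∑ t ∈ Finset.range k, (1 + (i ^ 2 + t))

/-- The length of `r_i`. -/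
def L (i : ℕ) : ℕ := P i (2 * i + 1)

lemma P_zero (i : ℕ) : P i 0 = 0 := by simp [P]

lemma P_succ (i k : ℕ) : P i (k + 1) = P i k + (1 + (i ^ 2 + k)) :=
  Finset.sum_range_succ _ _

lemma P_mono (i : ℕ) {k K : ℕ} (h : k ≤ K) : P i k ≤ P i K :=
  Finset.sum_le_sum_of_subset (Finset.range_subset_range.mpr h)

lemma P_lt (i : ℕ) {k K : ℕ} (h : k < K) : P i k + (i ^ 2 + k) < P i K := by
  have h1 : P i (k + 1) ≤ P i K := P_mono i h
  rw [P_succ] at h1; omega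

lemma P_lt_L (i : ℕ) {k : ℕ} (h : k ≤ 2 * i) : P i k + (i ^ 2 + k) < L i :=
  P_lt i (by omega)

lemma L_pos (i : ℕ) : 0 < L i := by
  have := P_lt_L i (k := 0) (by omega)
  omega

/-- Length of an initial segment of blocks. -/
lemma length_blocks (i n : ℕ) :
    (((List.range n).map fun j => xLetter ++ yPow (i ^ 2 + j)).flatten).length = P i n := by
  induction n with
  | zero => simp [P_zero]
  | succ n ih =>
    rw [List.range_succ, List.map_append, List.flatten_append, List.length_append, ih,
      P_succ]
    simp [xLetter, yPow]
    omega

lemma length_rEx (i : ℕ) : (rEx i).length = L i := length_blocks i (2 * i + 1)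

/-- The drop of `r_i` at the `k`-th `x` position starts with a full block. -/
lemma drop_rEx (i : ℕ) {k : ℕ} (h : k ≤ 2 * i) :
    ∃ rest, (rEx i).drop (P i k) =
      XL :: (List.replicate (i ^ 2 + k) YL ++ rest) := by
  have hsplit : List.range (2 * i + 1) = List.range' 0 k ++ List.range' k (2 * i + 1 - k) := by
    have := @List.range'_append 0 k (2 * i + 1 - k) 1
    simp only [one_mul, zero_add] at this
    have h2 : k + (2 * i + 1 - k) = 2 * i + 1 := by omega
    rw [h2] at this
    rw [List.range_eq_range']
    exact this.symm
  have hsplit2 : List.range' k (2 * i + 1 - k) = k :: List.range' (k + 1) (2 * i - k) := by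
    have : 2 * i + 1 - k = (2 * i - k) + 1 := by omega
    rw [this, List.range'_succ]
  have hrange' : List.range' 0 k = List.range k := (List.range_eq_range' (n := k)).symm
  refine ⟨(((List.range' (k + 1) (2 * i - k)).map fun j => xLetter ++ yPow (i ^ 2 + j)).flatten), ?_⟩
  rw [rEx, hsplit, hsplit2, List.map_append, List.flatten_append]
  rw [hrange']
  have hlen : (((List.range k).map fun j => xLetter ++ yPow (i ^ 2 + j)).flatten).length = P i k :=
    length_blocks i k
  rw [← hlen, List.drop_left]
  simp [xLetter, yPow, XL, YL]

/-- The cyclic letter function of `r_i`. -/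
def f (i a : ℕ) : Option (XY × Bool) := (rEx i)[a % L i]?

lemma gX (i : ℕ) {k : ℕ} (h : k ≤ 2 * i) : (rEx i)[P i k]? = some XL := by
  obtain ⟨rest, hrest⟩ := drop_rEx i h
  have := @List.getElem?_drop _ (rEx i) (P i k) 0
  rw [hrest] at this
  simpa using this.symm

lemma gY (i : ℕ) {k u : ℕ} (h : k ≤ 2 * i) (hu1 : 1 ≤ u) (hu2 : u ≤ i ^ 2 + k) :
    (rEx i)[P i k + u]? = some YL := by
  obtain ⟨rest, hrest⟩ := drop_rEx i h
  have := @List.getElem?_drop _ (rEx i) (P i k) u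
  rw [hrest] at this
  rw [← this]
  obtain ⟨v, rfl⟩ : ∃ v, u = v + 1 := ⟨u - 1, by omega⟩
  rw [List.getElem?_cons_succ, List.getElem?_append_left (by simp; omega),
    List.getElem?_replicate]
  simp; omega

/-- Every position below `L i` lies in a unique block. -/
lemma decomp (i : ℕ) {s : ℕ} (hs : s < L i) :
    ∃ k ≤ 2 * i, ∃ u ≤ i ^ 2 + k, s = P i k + u := by
  have key : ∀ K, K ≤ 2 * i + 1 → ∀ s, s < P i K →
      ∃ k < K, ∃ u ≤ i ^ 2 + k, s = P i k + u := by
    intro K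
    induction K with
    | zero => intro _ s hs; rw [P_zero] at hs; omega
    | succ K ih =>
      intro hK s hs
      rcases Nat.lt_or_ge s (P i K) with h' | h'
      · obtain ⟨k, hk, u, hu, hsu⟩ := ih (by omega) s h'
        exact ⟨k, by omega, u, hu, hsu⟩
      · rw [P_succ] at hs
        exact ⟨K, by omega, s - P i K, by omega, by omega⟩
  obtain ⟨k, hk, u, hu, hsu⟩ := key (2 * i + 1) le_rfl s hs
  exact ⟨k, by omega, u, hu, hsu⟩

lemma mod_lt_L (i a : ℕ) : a % L i < L i := Nat.mod_lt _ (L_pos i)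

lemma f_add (i a v : ℕ) : f i (a + v) = (rEx i)[(a % L i + v) % L i]? := by
  rw [f, Nat.mod_add_mod]

/-- `f` takes only the values `x` and `y`. -/
lemma fXY (i a : ℕ) : f i a = some XL ∨ f i a = some YL := by
  obtain ⟨k, hk, u, hu, hsu⟩ := decomp i (mod_lt_L i a)
  rw [f, hsu]
  rcases Nat.eq_zero_or_pos u with h0 | h0
  · left; rw [h0]; simpa using gX i hk
  · right; exact gY i hk h0 hu

/-- Next `x` within distance `i² + 2i`. -/
lemma nextX (i a : ℕ) : ∃ v ≤ i ^ 2 + 2 * i, f i (a + v) = some XL := by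
  obtain ⟨k, hk, u, hu, hsu⟩ := decomp i (mod_lt_L i a)
  rcases Nat.eq_zero_or_pos u with h0 | h0
  · refine ⟨0, by omega, ?_⟩
    rw [f_add, Nat.add_zero, Nat.mod_eq_of_lt (mod_lt_L i a), hsu, h0, Nat.add_zero]
    exact gX i hk
  · refine ⟨1 + (i ^ 2 + k) - u, by omega, ?_⟩
    rw [f_add, hsu]
    have hcase : P i k + u + (1 + (i ^ 2 + k) - u) = P i (k + 1) := by
      rw [P_succ]; omega
    rw [hcase]
    rcases Nat.lt_or_ge (k + 1) (2 * i + 1) with h' | h'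
    · rw [Nat.mod_eq_of_lt (by
        have := P_lt_L i (k := k + 1) (by omega); omega)]
      exact gX i (by omega)
    · have : k = 2 * i := by omega
      subst this
      have : P i (2 * i + 1) = L i := rfl
      rw [this, Nat.mod_self, ← P_zero i]
      exact gX i (by omega)

/-- Key lemma: two consecutive `x`'s in the cyclic word determine the block
and the position. -/
lemma block_ident (i a d : ℕ) (hd0 : 0 < d) (_hdL : d < L i)
    (hX1 : f i a = some XL) (hX2 : f i (a + d) = some XL)
    (hY : ∀ u, 0 < u → u < d → f i (a + u) = some YL) :
    i ^ 2 ≤ d - 1 ∧ d - 1 ≤ i ^ 2 + 2 * i ∧ a % L i = P i (d - 1 - i ^ 2) := by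
  obtain ⟨k, hk, u, hu, hsu⟩ := decomp i (mod_lt_L i a)
  -- u must be 0
  have hu0 : u = 0 := by
    by_contra h0
    have : f i a = some YL := by rw [f, hsu]; exact gY i hk (by omega) hu
    rw [hX1] at this
    exact XL_ne_YL (by simpa using this)
  subst hu0
  rw [Nat.add_zero] at hsu
  -- letters strictly inside the block are y's
  have hYin : ∀ v, 1 ≤ v → v ≤ i ^ 2 + k → f i (a + v) = some YL := by
    intro v hv1 hv2
    rw [f_add, hsu, Nat.mod_eq_of_lt (by have := P_lt_L i hk; omega)]
    exact gY i hk hv1 hv2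
  -- the next x is at distance 1 + i² + k
  have hXnext : f i (a + (1 + (i ^ 2 + k))) = some XL := by
    rw [f_add, hsu]
    have hcase : P i k + (1 + (i ^ 2 + k)) = P i (k + 1) := by rw [P_succ]
    rw [hcase]
    rcases Nat.lt_or_ge (k + 1) (2 * i + 1) with h' | h'
    · rw [Nat.mod_eq_of_lt (by have := P_lt_L i (k := k + 1) (by omega); omega)]
      exact gX i (by omega)
    · have hke : k = 2 * i := by omega
      subst hke
      have hLe : P i (2 * i + 1) = L i := rfl
      rw [hLe, Nat.mod_self, ← P_zero i]
      exact gX i (by omega)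
  -- therefore d = 1 + i² + k
  have hde : d = 1 + (i ^ 2 + k) := by
    rcases Nat.lt_trichotomy d (1 + (i ^ 2 + k)) with h' | h' | h'
    · exfalso
      have : f i (a + d) = some YL := hYin d (by omega) (by omega)
      rw [hX2] at this
      exact XL_ne_YL (by simpa using this)
    · exact h'
    · exfalso
      have : f i (a + (1 + (i ^ 2 + k))) = some YL := hY _ (by omega) h'
      rw [hXnext] at this
      exact XL_ne_YL (by simpa using this)
  refine ⟨by omega, by omega, ?_⟩
  have : d - 1 - i ^ 2 = k := by omega
  rw [this, hsu]

/-- Letters of a prefix of a rotation of `r_j` are given by `f`. -/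
lemma prefix_letter {q : Word XY} {j n t : ℕ}
    (hp : q <+: (rEx j).rotate n) (ht : t < q.length) :
    q[t]? = f j (t + n) := by
  have hlen : t < ((rEx j).rotate n).length := lt_of_lt_of_le ht hp.length_le
  have hL0 : 0 < (rEx j).length := by rw [length_rEx]; exact L_pos j
  have h1 : q[t] = ((rEx j).rotate n)[t] := hp.getElem ht
  have h2 : ((rEx j).rotate n)[t] =
      (rEx j)[(t + n) % (rEx j).length]'(Nat.mod_lt _ hL0) :=
    List.getElem_rotate _ _ _ hlen
  rw [List.getElem?_eq_getElem ht, h1, h2, f, ← length_rEx]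
  exact (List.getElem?_eq_getElem _).symm

lemma prefix_length_le {q : Word XY} {j n : ℕ} (hp : q <+: (rEx j).rotate n) :
    q.length ≤ L j := by
  have := hp.length_le
  rwa [List.length_rotate, length_rEx] at this

/-- Extraction of two consecutive `x`'s from a long prefix of a rotation. -/
lemma extract {i n : ℕ} {q : Word XY} (hp : q <+: (rEx i).rotate n)
    (hlen : 2 * (i + 1) ^ 2 ≤ q.length) :
    ∃ t₁ t₂, t₁ < t₂ ∧ t₂ < q.length ∧ q[t₁]? = some XL ∧ q[t₂]? = some XL ∧
      ∀ t, t₁ < t → t < t₂ → q[t]? = some YL := by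
  obtain ⟨t₁, ht₁, hft₁⟩ := nextX i n
  obtain ⟨v₂, hv₂, hfv₂⟩ := nextX i (n + t₁ + 1)
  have hipos : (i + 1) ^ 2 = i ^ 2 + 2 * i + 1 := by ring
  have hEx : ∃ d, 0 < d ∧ f i (n + t₁ + d) = some XL := by
    refine ⟨1 + v₂, by omega, ?_⟩
    have : n + t₁ + (1 + v₂) = n + t₁ + 1 + v₂ := by omega
    rw [this]; exact hfv₂
  classical
  set d := Nat.find hEx with hdDef
  obtain ⟨hd0, hfd⟩ := Nat.find_spec hEx
  have hdle : d ≤ 1 + v₂ := Nat.find_le ⟨by omega, by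
    have : n + t₁ + (1 + v₂) = n + t₁ + 1 + v₂ := by omega
    rw [this]; exact hfv₂⟩
  refine ⟨t₁, t₁ + d, by omega, by omega, ?_, ?_, ?_⟩
  · rw [prefix_letter hp (by omega)]
    have : t₁ + n = n + t₁ := by omega
    rw [this]; exact hft₁
  · rw [prefix_letter hp (by omega)]
    have : t₁ + d + n = n + t₁ + d := by omega
    rw [this]; exact hfd
  · intro t h1 h2
    rw [prefix_letter hp (by omega)]
    have hY : f i (t + n) ≠ some XL := by
      have := Nat.find_min hEx (m := t - t₁) (by omega)
      intro hcon
      apply this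
      refine ⟨by omega, ?_⟩
      have : n + t₁ + (t - t₁) = t + n := by omega
      rw [this]; exact hcon
    rcases fXY i (t + n) with h | h
    · exact absurd h hY
    · exact h

/-- Uniqueness: a word with two consecutive `x`'s determines the relator and
the rotation. -/
lemma unique_rot {q : Word XY} {j₁ n₁ j₂ n₂ t₁ t₂ : ℕ}
    (h1 : q <+: (rEx j₁).rotate n₁) (h2 : q <+: (rEx j₂).rotate n₂)
    (ht : t₁ < t₂) (ht2 : t₂ < q.length)
    (hx1 : q[t₁]? = some XL) (hx2 : q[t₂]? = some XL)
    (hy : ∀ t, t₁ < t → t < t₂ → q[t]? = some YL) :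
    j₁ = j₂ ∧ n₁ % L j₁ = n₂ % L j₁ := by
  set d := t₂ - t₁ with hd
  have hd0 : 0 < d := by omega
  have key : ∀ j n, q <+: (rEx j).rotate n →
      j ^ 2 ≤ d - 1 ∧ d - 1 ≤ j ^ 2 + 2 * j ∧ (n + t₁) % L j = P j (d - 1 - j ^ 2) := by
    intro j n hp
    have hqL : q.length ≤ L j := prefix_length_le hp
    apply block_ident j (n + t₁) d hd0 (by omega)
    · have := prefix_letter hp (t := t₁) (by omega)
      rw [hx1] at this
      rw [show n + t₁ = t₁ + n by omega]
      exact this.symm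
    · have := prefix_letter hp (t := t₂) (by omega)
      rw [hx2] at this
      rw [show n + t₁ + d = t₂ + n by omega]
      exact this.symm
    · intro u hu1 hu2
      have := prefix_letter hp (t := t₁ + u) (by omega)
      rw [hy (t₁ + u) (by omega) (by omega)] at this
      rw [show n + t₁ + u = t₁ + u + n by omega]
      exact this.symm
  obtain ⟨ha1, ha2, ha3⟩ := key j₁ n₁ h1
  obtain ⟨hb1, hb2, hb3⟩ := key j₂ n₂ h2
  have hj : j₁ = j₂ := by
    rcases Nat.lt_trichotomy j₁ j₂ with h | h | h
    · exfalso
      have : (j₁ + 1) ^ 2 ≤ j₂ ^ 2 := Nat.pow_le_pow_left (by omega) 2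
      nlinarith
    · exact h
    · exfalso
      have : (j₂ + 1) ^ 2 ≤ j₁ ^ 2 := Nat.pow_le_pow_left (by omega) 2
      nlinarith
  subst hj
  refine ⟨rfl, ?_⟩
  have : (n₁ + t₁) % L j₁ = (n₂ + t₁) % L j₁ := by rw [ha3, hb3]
  exact Nat.ModEq.add_right_cancel' t₁ this

/-- Combining extraction and uniqueness. -/
lemma two_prefix_eq {q : Word XY} {i m j₁ n₁ j₂ n₂ : ℕ}
    (hq : q <+: (rEx i).rotate m) (hlen : 2 * (i + 1) ^ 2 ≤ q.length)
    (h1 : q <+: (rEx j₁).rotate n₁) (h2 : q <+: (rEx j₂).rotate n₂) :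
    j₁ = j₂ ∧ n₁ % L j₁ = n₂ % L j₁ := by
  obtain ⟨t₁, t₂, ht, ht2, hx1, hx2, hy⟩ := extract hq hlen
  exact unique_rot h1 h2 ht ht2 hx1 hx2 hy

lemma rot_append (a b : Word XY) : (a ++ b).rotate a.length = b ++ a := by
  rw [List.rotate_eq_drop_append_take (by simp), List.drop_left, List.take_left]

lemma infix_rot {p w : Word XY} {n : ℕ} (h : p <:+: w.rotate n) :
    ∃ m, p <+: w.rotate m := by
  obtain ⟨u, v, huv⟩ := h
  refine ⟨n + u.length, ?_⟩
  have : (w.rotate n).rotate u.length = (p ++ v) ++ u := by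
    rw [← huv, List.append_assoc]
    exact rot_append u (p ++ v)
  rw [List.rotate_rotate] at this
  rw [this, List.append_assoc]
  exact List.prefix_append _ _

lemma suffix_rot {p w : Word XY} {n : ℕ} (h : p <:+ w.rotate n) :
    p <+: w.rotate (n + (w.length - p.length)) := by
  obtain ⟨u, hu⟩ := h
  have hul : u.length = w.length - p.length := by
    have := congrArg List.length hu
    simp at this
    omega
  have : (w.rotate n).rotate u.length = p ++ u := by
    rw [← hu]; exact rot_append u p
  rw [List.rotate_rotate, hul] at this
  rw [this]
  exact List.prefix_append _ _

lemma wInv_append (a b : Word XY) : wInv (a ++ b) = wInv b ++ wInv a := by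
  simp [wInv]

lemma wInv_wInv (w : Word XY) : wInv (wInv w) = w := by
  simp [wInv, List.map_reverse, List.map_map]
  have : ((fun a : XY × Bool => (a.1, !a.2)) ∘ fun a : XY × Bool => (a.1, !a.2)) = id := by
    funext a; simp
  rw [this, List.map_id]

lemma length_wInv (w : Word XY) : (wInv w).length = w.length := by simp [wInv]

lemma wInv_rotate (w : Word XY) (n : ℕ) : ∃ m, wInv (w.rotate n) = (wInv w).rotate m := by
  rcases eq_or_ne w [] with rfl | hw
  · exact ⟨0, by simp⟩
  have hlen : 0 < w.length := List.length_pos_iff.mpr hw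
  set n' := n % w.length with hn'
  have h1 : w.rotate n = w.rotate n' := (List.rotate_mod w n).symm
  have h2 : w.rotate n' = w.drop n' ++ w.take n' :=
    List.rotate_eq_drop_append_take (le_of_lt (Nat.mod_lt _ hlen))
  refine ⟨(wInv (w.drop n')).length, ?_⟩
  rw [h1, h2, wInv_append]
  have hw' : wInv w = wInv (w.drop n') ++ wInv (w.take n') := by
    conv_lhs => rw [← List.take_append_drop n' w]
    rw [wInv_append]
  rw [hw']
  exact (rot_append _ _).symm

lemma wInv_infix {p w : Word XY} (h : p <:+: w) : wInv p <:+: wInv w := by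
  obtain ⟨u, v, huv⟩ := h
  exact ⟨wInv v, wInv u, by rw [← huv, wInv_append, wInv_append, List.append_assoc]⟩

lemma wInv_suffix_of_prefix {p w : Word XY} (h : p <+: w) : wInv p <:+ wInv w := by
  obtain ⟨t, ht⟩ := h
  exact ⟨wInv t, by rw [← ht, wInv_append]⟩

lemma pos_rEx {i : ℕ} {a : XY × Bool} (h : a ∈ rEx i) : a.2 = true := by
  rw [rEx, List.mem_flatten] at h
  obtain ⟨l, hl, hal⟩ := h
  rw [List.mem_map] at hl
  obtain ⟨j, _, rfl⟩ := hl
  rw [List.mem_append] at hal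
  rcases hal with h | h
  · simp [xLetter] at h; rw [h]
  · simp [yPow] at h
    rw [h.2]

lemma neg_wInv {w : Word XY} (hw : ∀ a ∈ w, a.2 = true) {a : XY × Bool}
    (h : a ∈ wInv w) : a.2 = false := by
  rw [wInv, List.mem_reverse, List.mem_map] at h
  obtain ⟨b, hb, rfl⟩ := h
  simp [hw b hb]

end SmallCancel
/-- Example 3.12 of the paper, first part. For every `i ≥ 14`,
the relator `r_i = ∏_{j=0}^{2i} x y^{i²+j}` satisfies `|r_i| ≥ i³`, and every
piece (with respect to `R = {r_i : i ≥ 14}`) that is a subword of some cyclic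
shift of `r_i` or of `r_i⁻¹` has length strictly less than `2(i+1)²`. -/
theorem example_piece_bound :
    ∀ i, 14 ≤ i →
      i ^ 3 ≤ (rEx i).length ∧
      ∀ p s, IsPiece REx p → s ∈ cyclicClosure {rEx i} → p <:+: s →
        p.length < 2 * (i + 1) ^ 2 := by
  intro i _hi
  constructor
  · -- length bound
    rw [length_rEx]
    have hP : ∀ n, n * (1 + i ^ 2) ≤ P i n := by
      intro n
      induction n with
      | zero => simp [P_zero]
      | succ n ih =>
        rw [P_succ]
        have : (n + 1) * (1 + i ^ 2) = n * (1 + i ^ 2) + (1 + i ^ 2) := by ring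
        omega
    have h1 : (2 * i + 1) * (1 + i ^ 2) ≤ L i := hP (2 * i + 1)
    nlinarith
  · intro p s hpiece hs hinf
    by_contra hcon
    push_neg at hcon
    -- `p` is nonempty
    have hppos : 0 < p.length := by nlinarith
    have hpne : p ≠ [] := by
      intro h; rw [h] at hppos; simp at hppos
    obtain ⟨a, ha⟩ := List.exists_mem_of_ne_nil p hpne
    obtain ⟨r, hr, n, hcase⟩ := hs
    rw [Set.mem_singleton_iff] at hr
    subst hr
    obtain ⟨r₁, hr₁, r₂, hr₂, hne, hp1, hp2⟩ := hpiece
    obtain ⟨w₁, hw₁, n₁, hc₁⟩ := hr₁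
    obtain ⟨w₂, hw₂, n₂, hc₂⟩ := hr₂
    obtain ⟨j₁, hj₁, rfl⟩ := hw₁
    obtain ⟨j₂, hj₂, rfl⟩ := hw₂
    rcases hcase with hcase | hcase
    · -- `s` is a rotation of `r_i` : all letters of `p` are positive
      have hpos : ∀ b ∈ p, b.2 = true := by
        intro b hb
        have : b ∈ (rEx i).rotate n := by
          rw [← hcase]; exact hinf.subset hb
        exact pos_rEx (List.mem_rotate.mp this)
      -- both `r₁`, `r₂` are positive rotations
      have hc₁' : r₁ = (rEx j₁).rotate n₁ := by
        rcases hc₁ with h | h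
        · exact h
        · exfalso
          have : a ∈ (wInv (rEx j₁)).rotate n₁ := h ▸ hp1.subset ha
          have hneg := neg_wInv (fun b hb => pos_rEx hb) (List.mem_rotate.mp this)
          rw [hpos a ha] at hneg
          simp at hneg
      have hc₂' : r₂ = (rEx j₂).rotate n₂ := by
        rcases hc₂ with h | h
        · exact h
        · exfalso
          have : a ∈ (wInv (rEx j₂)).rotate n₂ := h ▸ hp2.subset ha
          have hneg := neg_wInv (fun b hb => pos_rEx hb) (List.mem_rotate.mp this)
          rw [hpos a ha] at hneg
          simp at hneg
      obtain ⟨m, hm⟩ := infix_rot (hcase ▸ hinf)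
      obtain ⟨hj, hn⟩ := two_prefix_eq hm hcon (hc₁' ▸ hp1) (hc₂' ▸ hp2)
      subst hj
      apply hne
      rw [hc₁', hc₂', ← List.rotate_mod (rEx j₁) n₁, ← List.rotate_mod (rEx j₁) n₂,
        length_rEx, hn]
    · -- `s` is a rotation of `r_i⁻¹` : all letters of `p` are negative
      have hneg : ∀ b ∈ p, b.2 = false := by
        intro b hb
        have : b ∈ (wInv (rEx i)).rotate n := by
          rw [← hcase]; exact hinf.subset hb
        exact neg_wInv (fun c hc => pos_rEx hc) (List.mem_rotate.mp this)
      -- both `r₁`, `r₂` are negative rotations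
      have hc₁' : r₁ = (wInv (rEx j₁)).rotate n₁ := by
        rcases hc₁ with h | h
        · exfalso
          have : a ∈ (rEx j₁).rotate n₁ := h ▸ hp1.subset ha
          have hpos := pos_rEx (List.mem_rotate.mp this)
          rw [hneg a ha] at hpos
          simp at hpos
        · exact h
      have hc₂' : r₂ = (wInv (rEx j₂)).rotate n₂ := by
        rcases hc₂ with h | h
        · exfalso
          have : a ∈ (rEx j₂).rotate n₂ := h ▸ hp2.subset ha
          have hpos := pos_rEx (List.mem_rotate.mp this)
          rw [hneg a ha] at hpos
          simp at hpos
        · exact h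
      -- pass to inverses
      set q := wInv p with hq
      have hqlen : q.length = p.length := length_wInv p
      -- q is an infix of a rotation of rEx i
      obtain ⟨ms, hms⟩ := wInv_rotate (wInv (rEx i)) n
      rw [wInv_wInv] at hms
      have hqinf : q <:+: (rEx i).rotate ms := by
        rw [← hms, ← hcase]; exact wInv_infix hinf
      obtain ⟨m, hm⟩ := infix_rot hqinf
      -- q is a suffix of the inverses of r₁ and r₂, hence a prefix of rotations
      obtain ⟨m₁, hm₁⟩ := wInv_rotate (wInv (rEx j₁)) n₁
      rw [wInv_wInv] at hm₁
      obtain ⟨m₂, hm₂⟩ := wInv_rotate (wInv (rEx j₂)) n₂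
      rw [wInv_wInv] at hm₂
      have hs₁ : q <:+ (rEx j₁).rotate m₁ := by
        rw [← hm₁, ← hc₁']; exact wInv_suffix_of_prefix hp1
      have hs₂ : q <:+ (rEx j₂).rotate m₂ := by
        rw [← hm₂, ← hc₂']; exact wInv_suffix_of_prefix hp2
      have hq₁ := suffix_rot hs₁
      have hq₂ := suffix_rot hs₂
      have hlenq : 2 * (i + 1) ^ 2 ≤ q.length := by rw [hqlen]; exact hcon
      obtain ⟨hj, hn⟩ := two_prefix_eq hm hlenq hq₁ hq₂
      subst hj
      apply hne
      have hmod : m₁ ≡ m₂ [MOD L j₁] :=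
        Nat.ModEq.add_right_cancel' _ hn
      have hrot : (rEx j₁).rotate m₁ = (rEx j₁).rotate m₂ := by
        rw [← List.rotate_mod (rEx j₁) m₁, ← List.rotate_mod (rEx j₁) m₂,
          length_rEx, hmod]
      have : wInv r₁ = wInv r₂ := by
        rw [hc₁', hc₂', hm₁, hm₂, hrot]
      calc r₁ = wInv (wInv r₁) := (wInv_wInv r₁).symm
        _ = wInv (wInv r₂) := by rw [this]
        _ = r₂ := wInv_wInv r₂
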